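/- (Corollary: the LMPID for m = N.) Let M ≥ 0 and r ≥ 1 be integers (in the paper M = K−r+1) and let x ∈ ℝ. Define g : ℝ → ℝ by g(s) := e^{−s x} · Σ_{k=0}^{M} C(M,k) · ((r−1)!/(r+k−1)!) · (s(1−x))^k. Then g is differentiable at 0 and g′(0) = (M/r) · (1−x) − x. -/

import Mathlib

open Finset

/-- Corollary (the LMPID for `m = N`): the likelihood ratio
`g(s) = e^{−sx} Σ_{k=0}^{M} C(M,k) ((r−1)!/(r+k−1)!) (s(1−x))^k`
is differentiable at `s = 0` with derivative `(M/r)(1−x) − x`. -/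
theorem stmt12 (M r : ℕ) (hr : 1 ≤ r) (x : ℝ) :
    HasDerivAt (fun s : ℝ => Real.exp (-(s * x)) *
      ∑ k ∈ Finset.range (M + 1), (M.choose k : ℝ) *
        ((Nat.factorial (r - 1) : ℝ) / (Nat.factorial (r + k - 1))) *
          (s * (1 - x)) ^ k)
      ((M : ℝ) / r * (1 - x) - x) 0 := by
  set c : ℕ → ℝ := fun k => (M.choose k : ℝ) *
      ((Nat.factorial (r - 1) : ℝ) / (Nat.factorial (r + k - 1))) with hc
  have hexp : HasDerivAt (fun s : ℝ => Real.exp (-(s * x)))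
      (Real.exp (-((0:ℝ) * x)) * -x) 0 := by
    have h1 : HasDerivAt (fun s : ℝ => -(s * x)) (-x) 0 := by
      simpa using ((hasDerivAt_id (0:ℝ)).mul_const x).fun_neg
    exact h1.exp
  have hfne : ((Nat.factorial (r-1) : ℝ)) ≠ 0 := Nat.cast_ne_zero.mpr (Nat.factorial_ne_zero _)
  have hr1 : r + 1 - 1 = r := by omega
  have hrfn : Nat.factorial r = r * Nat.factorial (r-1) := by
    cases r with
    | zero => omega
    | succ n => simp [Nat.factorial_succ]
  have hrf : (Nat.factorial r : ℝ) = r * Nat.factorial (r-1) := by exact_mod_cast hrfn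
  have hterm : ∀ k ∈ Finset.range (M + 1),
      HasDerivAt (fun s : ℝ => c k * (s * (1 - x)) ^ k)
        (c k * ((k : ℝ) * ((0:ℝ) * (1 - x)) ^ (k - 1) * (1 - x))) 0 := by
    intro k _
    have h2 : HasDerivAt (fun s : ℝ => s * (1 - x)) (1 - x) 0 := by
      simpa using (hasDerivAt_id (0:ℝ)).mul_const (1 - x)
    simpa [mul_comm, mul_assoc] using (h2.pow k).const_mul (c k)
  have hsum := HasDerivAt.fun_sum hterm
  have hD : ∑ k ∈ Finset.range (M + 1),
      (c k * ((k : ℝ) * ((0:ℝ) * (1 - x)) ^ (k - 1) * (1 - x)))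
      = (M : ℝ) / r * (1 - x) := by
    rcases Nat.eq_zero_or_pos M with hM | hM
    · subst hM; simp [c]
    · rw [Finset.sum_eq_single 1]
      · have hrpos : (r:ℝ) ≠ 0 := Nat.cast_ne_zero.mpr (by omega)
        have hrpos2 : (r:ℝ) ≠ 0 := Nat.cast_ne_zero.mpr (by omega)
        simp only [c, hr1, hrf, Nat.choose_one_right, pow_zero, Nat.cast_one]
        field_simp
        ring
      · intro k hk hk1
        rcases Nat.eq_zero_or_pos k with rfl | hkpos
        · simp
        · have : k - 1 ≠ 0 := by omega
          simp [zero_pow this]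
      · intro h
        exact absurd (Finset.mem_range.mpr (by omega)) h
  have hS0 : ∑ k ∈ Finset.range (M + 1), c k * ((0:ℝ) * (1 - x)) ^ k = 1 := by
    rw [Finset.sum_eq_single 0]
    · simp [c, div_self hfne]
    · intro k hk hk0
      simp [zero_pow hk0]
    · intro h; exact absurd (Finset.mem_range.mpr (by omega)) h
  have := hexp.fun_mul hsum
  rw [hD, hS0] at this
  simp only [hc] at this
  refine this.congr_deriv ?_
  simp
  ring
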